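/- Coefficient theorem for digraphs: for a directed graph G on n vertices with adjacency matrix A, the coefficient a_i of x^i in the characteristic polynomial det(xI − A) = xⁿ + a_{n−1}x^{n−1} + ⋯ + a₀ equals Σ_H (−1)^{c(H)}, where the sum runs over all subgraphs H on exactly n−i vertices that are vertex-disjoint unions of simple directed cycles (equivalently, spanned subsets S of size n−i together with a permutation of S all of whose edges lie in G), and c(H) is the number of cycles in H. -/
import Mathlib

set_option maxRecDepth 8000

open Matrix

section Aux

open Polynomial Equiv Finset

private def EE (n i : ℕ) (A : Matrix (Fin n) (Fin n) ℤ) : ℤ :=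
  ∑ σ : Equiv.Perm (Fin n),
    ∑ S ∈ Finset.univ.filter (fun S : Finset (Fin n) =>
        S.card = n - i ∧ σ.support ⊆ S),
      (-1 : ℤ) ^ (n - i) * (Equiv.Perm.sign σ : ℤ) * ∏ x ∈ S, A x (σ x)

private lemma lhsE (n i : ℕ) (A : Matrix (Fin n) (Fin n) ℤ) (hi : i < n) :
    A.charpoly.coeff i = EE n i A := by
  unfold EE
  rw [Matrix.charpoly, ← Matrix.det_transpose, Matrix.det_apply', finset_sum_coeff]
  refine Finset.sum_congr rfl fun σ _ => ?_
  have hkn : σ.support.card ≤ n := by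
    simpa using Finset.card_le_univ σ.support
  have hccard : (σ.supportᶜ : Finset (Fin n)).card = n - σ.support.card := by
    simp [Finset.card_compl]
  have hprod : (∏ x : Fin n, A.charmatrixᵀ (σ x) x) =
      (∏ x ∈ σ.supportᶜ, (X + C (-(A x x)))) *
        ((-1 : ℤ[X]) ^ σ.support.card * C (∏ x ∈ σ.support, A x (σ x))) := by
    rw [← Finset.prod_mul_prod_compl σ.support (fun x => A.charmatrixᵀ (σ x) x), mul_comm]
    congr 1
    · refine Finset.prod_congr rfl fun x hx => ?_
      have hfix : σ x = x := by simpa [Equiv.Perm.mem_support] using hx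
      rw [Matrix.transpose_apply, hfix, charmatrix_apply_eq, map_neg, sub_eq_add_neg]
    · have h2 : ∏ x ∈ σ.support, A.charmatrixᵀ (σ x) x
          = ∏ x ∈ σ.support, ((-1 : ℤ[X]) * C (A x (σ x))) := by
        refine Finset.prod_congr rfl fun x hx => ?_
        have hne : x ≠ σ x := fun h => (Equiv.Perm.mem_support.mp hx) h.symm
        rw [Matrix.transpose_apply, charmatrix_apply_ne _ _ _ hne, neg_one_mul]
      rw [h2, Finset.prod_mul_distrib, Finset.prod_const, map_prod]
  rw [hprod, show ((Equiv.Perm.sign σ : ℤ) : ℤ[X]) *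
      ((∏ x ∈ σ.supportᶜ, (X + C (-(A x x)))) *
        ((-1 : ℤ[X]) ^ σ.support.card * C (∏ x ∈ σ.support, A x (σ x)))) =
      C ((Equiv.Perm.sign σ : ℤ) * ((-1 : ℤ) ^ σ.support.card *
          ∏ x ∈ σ.support, A x (σ x))) *
        (∏ x ∈ σ.supportᶜ, (X + C (-(A x x)))) from by
    rw [_root_.map_mul, _root_.map_mul, map_pow, map_neg, _root_.map_one,
      (eq_intCast (Polynomial.C : ℤ →+* Polynomial ℤ) ((Equiv.Perm.sign σ : ℤ)))]; ring]
  rw [coeff_C_mul]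
  by_cases hk : σ.support.card ≤ n - i
  · -- main case
    have hile : i ≤ (σ.supportᶜ : Finset (Fin n)).card := by omega
    rw [Finset.prod_X_add_C_coeff _ _ hile, Finset.mul_sum]
    refine Finset.sum_nbij' (fun T => σ.support ∪ T) (fun S => S \ σ.support)
      ?_ ?_ ?_ ?_ ?_
    · intro T hT
      rw [Finset.mem_powersetCard] at hT
      have hdisj : Disjoint σ.support T :=
        Finset.disjoint_left.mpr fun x hx hxT => (Finset.mem_compl.mp (hT.1 hxT)) hx
      simp only [Finset.mem_filter, Finset.mem_univ, true_and]
      constructor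
      · rw [Finset.card_union_of_disjoint hdisj, hT.2, hccard]; omega
      · exact Finset.subset_union_left
    · intro S hS
      simp only [Finset.mem_filter, Finset.mem_univ, true_and] at hS
      rw [Finset.mem_powersetCard]
      constructor
      · exact fun x hx => Finset.mem_compl.mpr (Finset.mem_sdiff.mp hx).2
      · rw [Finset.card_sdiff_of_subset hS.2, hS.1, hccard]; omega
    · intro T hT
      rw [Finset.mem_powersetCard] at hT
      exact Finset.union_sdiff_cancel_left
        (Finset.disjoint_left.mpr fun x hx hxT => (Finset.mem_compl.mp (hT.1 hxT)) hx)
    · intro S hS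
      simp only [Finset.mem_filter, Finset.mem_univ, true_and] at hS
      exact Finset.union_sdiff_of_subset hS.2
    · intro T hT
      rw [Finset.mem_powersetCard] at hT
      have hdisj : Disjoint σ.support T :=
        Finset.disjoint_left.mpr fun x hx hxT => (Finset.mem_compl.mp (hT.1 hxT)) hx
      rw [Finset.prod_union hdisj]
      have hTid : ∏ x ∈ T, A x (σ x) = ∏ x ∈ T, A x x := by
        refine Finset.prod_congr rfl fun x hx => ?_
        have : σ x = x := by
          have := Finset.mem_compl.mp (hT.1 hx)
          simpa [Equiv.Perm.mem_support] using this
        rw [this]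
      have hTneg : ∏ x ∈ T, -A x x = (-1 : ℤ) ^ T.card * ∏ x ∈ T, A x x := by
        rw [Finset.prod_congr rfl (fun x _ => (neg_one_mul (A x x)).symm),
          Finset.prod_mul_distrib, Finset.prod_const]
      rw [hTneg, hTid]
      have hpow : (-1 : ℤ) ^ σ.support.card * (-1 : ℤ) ^ T.card = (-1 : ℤ) ^ (n - i) := by
        rw [← pow_add]
        congr 1
        rw [hT.2, hccard]
        omega
      calc (Equiv.Perm.sign σ : ℤ) * ((-1) ^ σ.support.card * ∏ x ∈ σ.support, A x (σ x)) *
            ((-1 : ℤ) ^ T.card * ∏ x ∈ T, A x x)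
          = ((-1 : ℤ) ^ σ.support.card * (-1 : ℤ) ^ T.card) * (Equiv.Perm.sign σ : ℤ) *
            ((∏ x ∈ σ.support, A x (σ x)) * ∏ x ∈ T, A x x) := by ring
        _ = _ := by rw [hpow]
  · -- degenerate case: coefficient is 0 and sum is empty
    have hdeg : (∏ x ∈ σ.supportᶜ, (X + C (-(A x x)))).natDegree < i := by
      rw [Polynomial.natDegree_prod_of_monic _ _ (fun x _ => monic_X_add_C _)]
      simp only [natDegree_X_add_C, Finset.sum_const, smul_eq_mul, mul_one]
      omega
    rw [Polynomial.coeff_eq_zero_of_natDegree_lt hdeg, mul_zero]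
    rw [Finset.sum_eq_zero, eq_comm]
    intro S hS
    simp only [Finset.mem_filter] at hS
    exact absurd (le_trans (Finset.card_le_card hS.2.2) (le_of_eq hS.2.1)) hk

private lemma rhsE (n i : ℕ) (A : Matrix (Fin n) (Fin n) ℤ)
    (h01 : ∀ i j, A i j = 0 ∨ A i j = 1) :
    (∑ S : Finset (Fin n), (if S.card = n - i then
        (∑ σ : Equiv.Perm {x // x ∈ S},
          if (∀ x : {x // x ∈ S}, A x.1 (σ x).1 = 1) then
            (-1 : ℤ) ^ (σ.cycleType.card + (S.card - σ.support.card)) else 0)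
      else 0)) = EE n i A := by
  unfold EE
  have key : ∀ S : Finset (Fin n), S.card = n - i →
      (∑ τ : Equiv.Perm {x // x ∈ S},
          if (∀ x : {x // x ∈ S}, A x.1 (τ x).1 = 1) then
            (-1 : ℤ) ^ (τ.cycleType.card + (S.card - τ.support.card)) else 0) =
      ∑ σ ∈ Finset.univ.filter (fun σ : Equiv.Perm (Fin n) => σ.support ⊆ S),
        (-1 : ℤ) ^ (n - i) * (Equiv.Perm.sign σ : ℤ) * ∏ x ∈ S, A x (σ x) := by
    intro S hS
    have hmem : ∀ σ : Equiv.Perm (Fin n),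
        σ ∈ Finset.univ.filter (fun σ : Equiv.Perm (Fin n) => σ.support ⊆ S) ↔
        (∀ a, ¬ a ∈ S → σ a = a) := by
      intro σ
      simp only [Finset.mem_filter, Finset.mem_univ, true_and, Finset.subset_iff,
        Equiv.Perm.mem_support]
      constructor
      · intro h a ha
        by_contra hne
        exact ha (h hne)
      · intro h a ha
        by_contra hna
        exact ha (h a hna)
    rw [Finset.sum_subtype _ hmem
      (fun σ => (-1 : ℤ) ^ (n - i) * (Equiv.Perm.sign σ : ℤ) * ∏ x ∈ S, A x (σ x))]
    rw [← Equiv.sum_comp (Equiv.Perm.subtypeEquivSubtypePerm (· ∈ S))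
      (fun σ => (-1 : ℤ) ^ (n - i) * (Equiv.Perm.sign σ.1 : ℤ) * ∏ x ∈ S, A x (σ.1 x))]
    refine Finset.sum_congr rfl fun τ _ => ?_
    simp only [Equiv.Perm.subtypeEquivSubtypePerm_apply_coe]
    have hsign : Equiv.Perm.sign (Equiv.Perm.ofSubtype τ) = Equiv.Perm.sign τ := by
      have h' := Equiv.Perm.sign_ofSubtype τ
      convert h' using 3
    have hprodeq : ∏ x ∈ S, A x (Equiv.Perm.ofSubtype τ x)
        = ∏ x ∈ S.attach, A x.1 (τ x).1 := by
      rw [← Finset.prod_attach S (fun x => A x (Equiv.Perm.ofSubtype τ x))]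
      refine Finset.prod_congr rfl fun x _ => ?_
      rw [Equiv.Perm.ofSubtype_apply_of_mem τ x.2]
    rw [hsign, hprodeq]
    have hsc : τ.support.card ≤ S.card := by
      simpa [Fintype.card_coe] using Finset.card_le_univ τ.support
    by_cases h : ∀ x : {x // x ∈ S}, A x.1 (τ x).1 = 1
    · rw [if_pos h]
      have : ∏ x ∈ S.attach, A x.1 (τ x).1 = 1 :=
        Finset.prod_eq_one fun x _ => h x
      rw [this, mul_one, Equiv.Perm.sign_of_cycleType, Equiv.Perm.sum_cycleType]
      push_cast
      have hgen : ∀ a b c : ℕ, (-1:ℤ) ^ (a + b) = (-1:ℤ) ^ (a + b + 2 * c) := by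
        intro a b c
        rw [pow_add ((-1:ℤ)) (a + b) (2 * c), pow_mul]
        norm_num
      have harith : (τ.cycleType.card + (S.card - τ.support.card)) + 2 * τ.support.card
          = (n - i) + (τ.support.card + τ.cycleType.card) := by omega
      rw [← pow_add, hgen (τ.cycleType.card) (S.card - τ.support.card) (τ.support.card),
        harith, pow_add]
    · rw [if_neg h]
      obtain ⟨x, hx⟩ := not_forall.mp h
      have hzero : A x.1 (τ x).1 = 0 := (h01 x.1 (τ x).1).resolve_right hx
      rw [Finset.prod_eq_zero (Finset.mem_attach S x) hzero, mul_zero]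
  calc (∑ S : Finset (Fin n), (if S.card = n - i then
        (∑ σ : Equiv.Perm {x // x ∈ S},
          if (∀ x : {x // x ∈ S}, A x.1 (σ x).1 = 1) then
            (-1 : ℤ) ^ (σ.cycleType.card + (S.card - σ.support.card)) else 0)
      else 0))
      = ∑ S : Finset (Fin n), ∑ σ : Equiv.Perm (Fin n),
          if S.card = n - i ∧ σ.support ⊆ S then
            (-1 : ℤ) ^ (n - i) * (Equiv.Perm.sign σ : ℤ) * ∏ x ∈ S, A x (σ x)
          else 0 := by
        refine Finset.sum_congr rfl fun S _ => ?_
        by_cases hS : S.card = n - i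
        · rw [if_pos hS, key S hS, Finset.sum_filter]
          refine Finset.sum_congr rfl fun σ _ => ?_
          simp [hS]
        · rw [if_neg hS]
          symm
          refine Finset.sum_eq_zero fun σ _ => ?_
          rw [if_neg (by tauto)]
    _ = _ := by
        rw [Finset.sum_comm]
        refine Finset.sum_congr rfl fun σ _ => ?_
        rw [Finset.sum_filter]

end Aux

theorem stmt9 (n : ℕ) (A : Matrix (Fin n) (Fin n) ℤ)
    (h01 : ∀ i j, A i j = 0 ∨ A i j = 1) (i : ℕ) (hi : i < n) :
    A.charpoly.coeff i =
      ∑ S : Finset (Fin n), (if S.card = n - i then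
        (∑ σ : Equiv.Perm {x // x ∈ S},
          if (∀ x : {x // x ∈ S}, A x.1 (σ x).1 = 1) then
            (-1 : ℤ) ^ (σ.cycleType.card + (S.card - σ.support.card)) else 0)
      else 0) := by
  rw [lhsE n i A hi, rhsE n i A h01]
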